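/- Let A be a real n×n matrix with det(A) ≠ 0, x a positive solution of x_i' = x_i(Ax)_i, and suppose P : ℝ → ℝ_{>0} is differentiable with P' = P·(b·x) for some row vector b ∈ ℝ^n (i.e., P is a Darboux function with linear cofactor b·x). Then the function I(t) = det(A)·log P(t) − (b · adj(A)) · (log x_1(t), …, log x_n(t)) is constant in t. -/

import Mathlib

/-- If `det A ≠ 0`, `x` is a positive solution of `x_i' = x_i (A x)_i` and `P > 0`
is a Darboux function with linear cofactor `b·x`, i.e. `P' = P (Σ_j b_j x_j)`, then
`I(t) = det(A)·log P(t) − (b·adj(A))·(log x₁(t), …, log x_n(t))` is constant. -/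
theorem darboux_first_integral {n : ℕ} (A : Matrix (Fin n) (Fin n) ℝ)
    (hA : A.det ≠ 0) (b : Fin n → ℝ)
    (x : ℝ → Fin n → ℝ) (hxpos : ∀ t i, 0 < x t i)
    (hx : ∀ i t, HasDerivAt (fun s => x s i) (x t i * ∑ j, A i j * x t j) t)
    (P : ℝ → ℝ) (hPpos : ∀ t, 0 < P t)
    (hP : ∀ t, HasDerivAt P (P t * ∑ j, b j * x t j) t) :
    ∀ t₁ t₂ : ℝ,
      A.det * Real.log (P t₁) - ∑ i, Matrix.vecMul b A.adjugate i * Real.log (x t₁ i)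
      = A.det * Real.log (P t₂) - ∑ i, Matrix.vecMul b A.adjugate i * Real.log (x t₂ i) := by
  set c : Fin n → ℝ := Matrix.vecMul b A.adjugate with hc
  have key : ∀ t, HasDerivAt
      (fun s => A.det * Real.log (P s) - ∑ i, c i * Real.log (x s i)) 0 t := by
    intro t
    have h1 : HasDerivAt (fun s => Real.log (P s)) (∑ j, b j * x t j) t := by
      have := (hP t).log (hPpos t).ne'
      have e : P t * (∑ j, b j * x t j) / P t = ∑ j, b j * x t j :=
        mul_div_cancel_left₀ _ (hPpos t).ne'
      rwa [e] at this
    have h2 : ∀ i, HasDerivAt (fun s => Real.log (x s i)) (∑ j, A i j * x t j) t := by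
      intro i
      have := (hx i t).log (hxpos t i).ne'
      have e : x t i * (∑ j, A i j * x t j) / x t i = ∑ j, A i j * x t j :=
        mul_div_cancel_left₀ _ (hxpos t i).ne'
      rwa [e] at this
    have h3 : HasDerivAt (fun s => ∑ i, c i * Real.log (x s i))
        (∑ i, c i * ∑ j, A i j * x t j) t :=
      HasDerivAt.fun_sum (fun i _ => (h2 i).const_mul (c i))
    have h4 := (h1.const_mul A.det).sub h3
    have e0 : A.det * ∑ j, b j * x t j - ∑ i, c i * ∑ j, A i j * x t j = 0 := by
      have hca : Matrix.vecMul c A = A.det • b := by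
        rw [hc, Matrix.vecMul_vecMul, Matrix.adjugate_mul]
        ext j
        simp [Matrix.vecMul, dotProduct, Matrix.one_apply, Finset.mul_sum,
          mul_ite, ite_mul, Finset.sum_ite_eq', mul_comm]
      have : ∑ i, c i * ∑ j, A i j * x t j = ∑ j, (Matrix.vecMul c A) j * x t j := by
        simp only [Matrix.vecMul, dotProduct, Finset.sum_mul, Finset.mul_sum]
        rw [Finset.sum_comm]
        congr 1; ext i; congr 1; ext j; ring
      rw [this, hca, sub_eq_zero, Finset.mul_sum]
      congr 1; ext j; simp; ring
    rwa [e0] at h4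
  intro t₁ t₂
  exact is_const_of_deriv_eq_zero (fun t => (key t).differentiableAt)
    (fun t => (key t).deriv) t₁ t₂
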